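/- Let H be a group containing a non-identity element, let G be an ICC group, and let G act on a set X with every orbit infinite. Then the generalized wreath product H ≀_X G = W ⋊ G is ICC; that is, the conjugacy class of every non-identity element of W ⋊ G is infinite. -/
import Mathlib


/-- The restricted direct sum `H^{⊕X}`: the subgroup of `X → H` consisting of functions
equal to the identity in all but finitely many coordinates. -/
def restrictedProd (H X : Type) [Group H] : Subgroup (X → H) where
  carrier := {f | (Function.mulSupport f).Finite}
  one_mem' := by simp [Function.mulSupport_one]
  mul_mem' := by
    intro a b ha hb
    exact ((ha.union hb).subset (Function.mulSupport_mul a b))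
  inv_mem' := by
    intro a ha
    simpa [Function.mulSupport_inv] using ha

/-- The shift action of `G` on `H^{⊕X}` by automorphisms, `(g·f)(x) = f(g⁻¹·x)`. -/
def wreathShift (H G X : Type) [Group H] [Group G] [MulAction G X] :
    G →* MulAut ↥(restrictedProd H X) where
  toFun g :=
    { toFun := fun f => ⟨fun x => (f : X → H) (g⁻¹ • x),
        Set.Finite.subset (f.2.image (g • ·)) (by
          intro x hx
          exact ⟨g⁻¹ • x, hx, smul_inv_smul g x⟩)⟩
      invFun := fun f => ⟨fun x => (f : X → H) (g • x),
        Set.Finite.subset (f.2.image (g⁻¹ • ·)) (by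
          intro x hx
          exact ⟨g • x, hx, inv_smul_smul g x⟩)⟩
      left_inv := by
        intro f
        ext x
        simp
      right_inv := by
        intro f
        ext x
        simp
      map_mul' := by
        intro f₁ f₂
        rfl }
  map_one' := by
    ext f x
    simp
  map_mul' := by
    intro g₁ g₂
    ext f x
    simp [mul_smul]

/-- Let `H` be a group with a non-identity element, let `G` be an ICC group acting on a set
`X` with every orbit infinite. Then the generalized wreath product `H ≀_X G = H^{⊕X} ⋊ G`
is ICC: every non-identity element has an infinite conjugacy class. -/
theorem stmt11 (H G X : Type) [Group H] [Group G] [MulAction G X]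
    (hH : ∃ h : H, h ≠ 1)
    (hG : ∀ g : G, g ≠ 1 → {x : G | IsConj g x}.Infinite)
    (horb : ∀ x : X, (MulAction.orbit G x).Infinite) :
    ∀ w : SemidirectProduct ↥(restrictedProd H X) G (wreathShift H G X),
      w ≠ 1 → {u | IsConj w u}.Infinite := by
  intro w hw
  by_cases hg : w.right = 1
  · -- left component nontrivial
    have hf : w.left ≠ 1 := by
      intro h
      exact hw (by ext <;> simp [h, hg])
    obtain ⟨x₀, hx₀⟩ : ∃ x, (w.left : X → H) x ≠ 1 := by
      by_contra h
      push_neg at h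
      exact hf (Subtype.ext (funext fun x => h x))
    intro hfin
    have hA : (⋃ u ∈ {u | IsConj w u},
        Function.mulSupport ((SemidirectProduct.left u : ↥(restrictedProd H X)) : X → H)).Finite :=
      hfin.biUnion fun u _ => u.left.2
    refine (horb x₀) (hA.subset ?_)
    rintro y ⟨k, rfl⟩
    refine Set.mem_biUnion (isConj_iff.mpr
      ⟨SemidirectProduct.inr k, rfl⟩ :
        SemidirectProduct.inr k * w * (SemidirectProduct.inr k)⁻¹ ∈ {u | IsConj w u}) ?_
    have : ((SemidirectProduct.inr k * w * (SemidirectProduct.inr k)⁻¹).left :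
        ↥(restrictedProd H X)) = wreathShift H G X k w.left := by
      simp
    rw [Function.mem_mulSupport, this]
    show (w.left : X → H) (k⁻¹ • (k • x₀)) ≠ 1
    simpa using hx₀
  · have h1 : {x : G | IsConj w.right x} ⊆
        SemidirectProduct.rightHom '' {u | IsConj w u} := by
      intro x hx
      obtain ⟨k, hk⟩ := isConj_iff.mp hx
      exact ⟨SemidirectProduct.inr k * w * (SemidirectProduct.inr k)⁻¹,
        isConj_iff.mpr ⟨SemidirectProduct.inr k, rfl⟩, by simpa using hk⟩
    exact Set.Infinite.of_image _ ((hG w.right hg).mono h1)
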